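/- Let G be a finite simple undirected graph on nodes {1,…,N} with self-inclusive neighborhoods Ñ(i), let d_1,…,d_N > 0 (node degrees), let S ∈ ℝ^{N×d}, and let 𝒞_1,…,𝒞_N ∈ ℝ. Define the degree-normalized adaptive objective 𝓛(F) = Σ_i ‖F_i − S_i‖₂² + (1/2)·Σ_i 𝒞_i·Σ_{j∈Ñ(i)} ‖F_i/√d_i − F_j/√d_j‖₂². Then 𝓛 is differentiable and the i-th row of its gradient (with respect to the Frobenius inner product) at F is 2(F_i − S_i) + Σ_{j∈Ñ(i)} ((𝒞_i + 𝒞_j)/√d_i)·(F_i/√d_i − F_j/√d_j). -/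

import Mathlib

open Matrix BigOperators

attribute [local instance] Matrix.frobeniusNormedAddCommGroup Matrix.frobeniusNormedSpace

/-- The Frobenius inner product `⟨G, H⟩ = tr(Gᵀ H)` with its first argument fixed,
as a continuous linear functional on `ℝ^{N×d}`. -/
noncomputable def frobInner {N d : ℕ} (G : Matrix (Fin N) (Fin d) ℝ) :
    Matrix (Fin N) (Fin d) ℝ →L[ℝ] ℝ :=
  LinearMap.toContinuousLinearMap
    { toFun := fun H => Matrix.trace (Gᵀ * H)
      map_add' := by intro x y; simp [Matrix.mul_add]
      map_smul' := by intro m x; simp [Matrix.mul_smul] }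

/-- The degree-normalized adaptive (Ada-UGNN) denoising objective
`𝓛(F) = Σ_i ‖F_i − S_i‖₂² + (1/2)·Σ_i 𝒞_i·Σ_{j∈Ñ(i)} ‖F_i/√d_i − F_j/√d_j‖₂²`,
where `Ñ(i) = N(i) ∪ {i}` is the self-inclusive neighborhood of node `i` and
`d_i > 0` is the degree of node `i`. -/
noncomputable def adaUgnnObjective {N d : ℕ} (G : SimpleGraph (Fin N))
    [DecidableRel G.Adj] (deg : Fin N → ℝ) (S : Matrix (Fin N) (Fin d) ℝ)
    (C : Fin N → ℝ) (F : Matrix (Fin N) (Fin d) ℝ) : ℝ :=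
  (∑ i, ∑ k, (F i k - S i k) ^ 2) +
    (1 / 2) * ∑ i, C i * ∑ j ∈ insert i (G.neighborFinset i),
      ∑ k, (F i k / Real.sqrt (deg i) - F j k / Real.sqrt (deg j)) ^ 2

/-- The degree-normalized adaptive objective
`𝓛(F) = Σ_i ‖F_i − S_i‖₂² + (1/2)·Σ_i 𝒞_i·Σ_{j∈Ñ(i)} ‖F_i/√d_i − F_j/√d_j‖₂²`
(with degrees `d_i > 0`) is differentiable, and w.r.t. the Frobenius inner product
the `i`-th row of its gradient at `F` is
`2(F_i − S_i) + Σ_{j∈Ñ(i)} ((𝒞_i + 𝒞_j)/√d_i)·(F_i/√d_i − F_j/√d_j)`. -/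
noncomputable def projCLM {N d : ℕ} (i : Fin N) (k : Fin d) :
    Matrix (Fin N) (Fin d) ℝ →L[ℝ] ℝ :=
  LinearMap.toContinuousLinearMap
    { toFun := fun F => F i k
      map_add' := fun _ _ => rfl
      map_smul' := fun _ _ => rfl }

noncomputable def pdiffCLM {N d : ℕ} (deg : Fin N → ℝ) (i j : Fin N) (k : Fin d) :
    Matrix (Fin N) (Fin d) ℝ →L[ℝ] ℝ :=
  LinearMap.toContinuousLinearMap
    { toFun := fun F => F i k / Real.sqrt (deg i) - F j k / Real.sqrt (deg j)
      map_add' := by intro x y; simp only [Matrix.add_apply]; ring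
      map_smul' := by intro m x; simp only [Matrix.smul_apply, smul_eq_mul, RingHom.id_apply]; ring }

lemma sum_nbhd_swap {N : ℕ} (G : SimpleGraph (Fin N)) [DecidableRel G.Adj]
    (g : Fin N → Fin N → ℝ) :
    ∑ i, ∑ j ∈ insert i (G.neighborFinset i), g i j
      = ∑ i, ∑ j ∈ insert i (G.neighborFinset i), g j i := by
  have hmem : ∀ i j : Fin N, (j ∈ insert i (G.neighborFinset i)) = (i ∈ insert j (G.neighborFinset j)) := by
    intro i j
    simp only [Finset.mem_insert, SimpleGraph.mem_neighborFinset, eq_iff_iff]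
    constructor <;> rintro (rfl | h)
    · exact Or.inl rfl
    · exact Or.inr (G.adj_symm h)
    · exact Or.inl rfl
    · exact Or.inr (G.adj_symm h)
  calc ∑ i, ∑ j ∈ insert i (G.neighborFinset i), g i j
      = ∑ i, ∑ j, if j ∈ insert i (G.neighborFinset i) then g i j else 0 := by
        refine Finset.sum_congr rfl fun i _ => ?_
        rw [Finset.sum_ite_mem, Finset.univ_inter]
    _ = ∑ j, ∑ i, if j ∈ insert i (G.neighborFinset i) then g i j else 0 := Finset.sum_comm
    _ = ∑ j, ∑ i, if i ∈ insert j (G.neighborFinset j) then g i j else 0 := by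
        simp_rw [hmem]
    _ = ∑ j, ∑ i ∈ insert j (G.neighborFinset j), g i j := by
        refine Finset.sum_congr rfl fun j _ => ?_
        rw [Finset.sum_ite_mem, Finset.univ_inter]

theorem stmt_16 {N d : ℕ} (G : SimpleGraph (Fin N)) [DecidableRel G.Adj]
    (deg : Fin N → ℝ) (hdeg : ∀ i, 0 < deg i)
    (S : Matrix (Fin N) (Fin d) ℝ) (C : Fin N → ℝ)
    (F : Matrix (Fin N) (Fin d) ℝ) :
    HasFDerivAt (adaUgnnObjective G deg S C)
      (frobInner (fun i k =>
        2 * (F i k - S i k) +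
          ∑ j ∈ insert i (G.neighborFinset i),
            ((C i + C j) / Real.sqrt (deg i)) *
              (F i k / Real.sqrt (deg i) - F j k / Real.sqrt (deg j)))) F := by
  have h1 : ∀ (i : Fin N) (k : Fin d),
      HasFDerivAt (fun F : Matrix (Fin N) (Fin d) ℝ => (F i k - S i k)^2)
        ((2 * (F i k - S i k)) • projCLM i k) F := by
    intro i k
    have h := ((projCLM i k).hasFDerivAt (x := F)).sub_const (S i k)
    refine ((h.mul h).congr_fderiv ?_).congr_of_eventuallyEq ?_
    · simp [projCLM, two_mul, add_smul]
      rfl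
    · filter_upwards with x; simp [projCLM, sq]
      rfl
  have h2 : ∀ (i j : Fin N) (k : Fin d),
      HasFDerivAt (fun F : Matrix (Fin N) (Fin d) ℝ =>
          (F i k / Real.sqrt (deg i) - F j k / Real.sqrt (deg j))^2)
        ((2 * (F i k / Real.sqrt (deg i) - F j k / Real.sqrt (deg j))) • pdiffCLM deg i j k) F := by
    intro i j k
    have h := (pdiffCLM deg i j k).hasFDerivAt (x := F)
    refine ((h.mul h).congr_fderiv ?_).congr_of_eventuallyEq ?_
    · simp [pdiffCLM, two_mul, add_smul]
      rfl
    · filter_upwards with x; simp [pdiffCLM, sq]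
  have hmain : HasFDerivAt (adaUgnnObjective G deg S C)
      ((∑ i, ∑ k, (2 * (F i k - S i k)) • projCLM i k) +
        (1/2 : ℝ) • ∑ i, C i • ∑ j ∈ insert i (G.neighborFinset i), ∑ k,
          (2 * (F i k / Real.sqrt (deg i) - F j k / Real.sqrt (deg j))) • pdiffCLM deg i j k) F := by
    unfold adaUgnnObjective
    exact (HasFDerivAt.fun_sum fun i _ => HasFDerivAt.fun_sum fun k _ => h1 i k).add
      ((HasFDerivAt.fun_sum fun i _ =>
        (HasFDerivAt.fun_sum fun j _ => HasFDerivAt.fun_sum fun k _ => h2 i j k).const_mul (C i)).const_mul (1/2))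
  refine hmain.congr_fderiv ?_
  ext H
  simp only [ContinuousLinearMap.add_apply, ContinuousLinearMap.smul_apply,
    ContinuousLinearMap.coe_sum', Finset.sum_apply, smul_eq_mul, frobInner,
    projCLM, pdiffCLM, LinearMap.coe_toContinuousLinearMap', LinearMap.coe_mk, AddHom.coe_mk,
    Matrix.trace, Matrix.diag, Matrix.mul_apply, Matrix.transpose_apply]
  dsimp only [Matrix.transpose, Matrix.of_apply, AddHom.coe_mk]
  have hp : ∀ x c, ({ toFun := fun F : Matrix (Fin N) (Fin d) ℝ => F x c, map_add' := fun _ _ => rfl } : AddHom _ ℝ) H = H x c := fun _ _ => rfl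
  simp only [hp]
  -- notation
  have hswap := sum_nbhd_swap G
  -- T2 = -T3
  have hT2 : (∑ i, ∑ j ∈ insert i (G.neighborFinset i), ∑ k,
        C i * (F i k / Real.sqrt (deg i) - F j k / Real.sqrt (deg j)) * (H j k / Real.sqrt (deg j)))
      = -∑ i, ∑ j ∈ insert i (G.neighborFinset i), ∑ k,
        C j * (F i k / Real.sqrt (deg i) - F j k / Real.sqrt (deg j)) * (H i k / Real.sqrt (deg i)) := by
    rw [hswap (fun i j => ∑ k, C i * (F i k / Real.sqrt (deg i) - F j k / Real.sqrt (deg j)) * (H j k / Real.sqrt (deg j)))]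
    rw [← Finset.sum_neg_distrib]
    refine Finset.sum_congr rfl fun i _ => ?_
    rw [← Finset.sum_neg_distrib]
    refine Finset.sum_congr rfl fun j _ => ?_
    rw [← Finset.sum_neg_distrib]
    exact Finset.sum_congr rfl fun k _ => by ring
  -- cross term LHS = T1 - T2
  have hL : (1/2 : ℝ) * ∑ i, C i * ∑ j ∈ insert i (G.neighborFinset i), ∑ k,
        2 * (F i k / Real.sqrt (deg i) - F j k / Real.sqrt (deg j))
          * (H i k / Real.sqrt (deg i) - H j k / Real.sqrt (deg j))
      = (∑ i, ∑ j ∈ insert i (G.neighborFinset i), ∑ k,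
          C i * (F i k / Real.sqrt (deg i) - F j k / Real.sqrt (deg j)) * (H i k / Real.sqrt (deg i)))
        - ∑ i, ∑ j ∈ insert i (G.neighborFinset i), ∑ k,
          C i * (F i k / Real.sqrt (deg i) - F j k / Real.sqrt (deg j)) * (H j k / Real.sqrt (deg j)) := by
    simp only [Finset.mul_sum, ← Finset.sum_sub_distrib]
    exact Finset.sum_congr rfl fun i _ => Finset.sum_congr rfl fun j _ =>
      Finset.sum_congr rfl fun k _ => by ring
  -- cross term RHS = T1 + T3
  have hR : (∑ i, ∑ k, (∑ j ∈ insert i (G.neighborFinset i),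
        (C i + C j) / Real.sqrt (deg i) * (F i k / Real.sqrt (deg i) - F j k / Real.sqrt (deg j))) * H i k)
      = (∑ i, ∑ j ∈ insert i (G.neighborFinset i), ∑ k,
          C i * (F i k / Real.sqrt (deg i) - F j k / Real.sqrt (deg j)) * (H i k / Real.sqrt (deg i)))
        + ∑ i, ∑ j ∈ insert i (G.neighborFinset i), ∑ k,
          C j * (F i k / Real.sqrt (deg i) - F j k / Real.sqrt (deg j)) * (H i k / Real.sqrt (deg i)) := by
    rw [← Finset.sum_add_distrib]
    refine Finset.sum_congr rfl fun i _ => ?_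
    rw [← Finset.sum_add_distrib]
    calc ∑ k, (∑ j ∈ insert i (G.neighborFinset i),
            (C i + C j) / Real.sqrt (deg i) * (F i k / Real.sqrt (deg i) - F j k / Real.sqrt (deg j))) * H i k
        = ∑ k, ∑ j ∈ insert i (G.neighborFinset i),
            (C i + C j) / Real.sqrt (deg i) * (F i k / Real.sqrt (deg i) - F j k / Real.sqrt (deg j)) * H i k := by
          exact Finset.sum_congr rfl fun k _ => Finset.sum_mul _ _ _
      _ = ∑ j ∈ insert i (G.neighborFinset i), ∑ k,
            (C i + C j) / Real.sqrt (deg i) * (F i k / Real.sqrt (deg i) - F j k / Real.sqrt (deg j)) * H i k :=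
          Finset.sum_comm
      _ = ∑ j ∈ insert i (G.neighborFinset i),
          ((∑ k, C i * (F i k / Real.sqrt (deg i) - F j k / Real.sqrt (deg j)) * (H i k / Real.sqrt (deg i)))
            + ∑ k, C j * (F i k / Real.sqrt (deg i) - F j k / Real.sqrt (deg j)) * (H i k / Real.sqrt (deg i))) := by
          refine Finset.sum_congr rfl fun j _ => ?_
          rw [← Finset.sum_add_distrib]
          exact Finset.sum_congr rfl fun k _ => by ring
  -- finish
  rw [← Finset.sum_comm (f := fun (i : Fin N) (k : Fin d) =>
    (2 * (F i k - S i k) + ∑ j ∈ insert i (G.neighborFinset i),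
      (C i + C j) / Real.sqrt (deg i) * (F i k / Real.sqrt (deg i) - F j k / Real.sqrt (deg j))) * H i k)]
  have hsplit : (∑ i, ∑ k, (2 * (F i k - S i k) + ∑ j ∈ insert i (G.neighborFinset i),
        (C i + C j) / Real.sqrt (deg i) * (F i k / Real.sqrt (deg i) - F j k / Real.sqrt (deg j))) * H i k)
      = (∑ i, ∑ k, 2 * (F i k - S i k) * H i k)
        + ∑ i, ∑ k, (∑ j ∈ insert i (G.neighborFinset i),
            (C i + C j) / Real.sqrt (deg i) * (F i k / Real.sqrt (deg i) - F j k / Real.sqrt (deg j))) * H i k := by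
    simp only [← Finset.sum_add_distrib]
    exact Finset.sum_congr rfl fun i _ => Finset.sum_congr rfl fun k _ => by ring
  rw [hsplit, hR, hL, hT2]
  ring
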